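/- Let ψℓ(x) := (1 − ((2d+4)/(d+1))‖x‖ + ((d+3)/(d+1))‖x‖²)·1{‖x‖≤1} on ℝ^d. Then for every convex function g: ℝ^d → ℝ with g(0) = 0, ∫_{‖x‖≤1} g(x)ψℓ(x) dx ≤ 0. -/

import Mathlib

open MeasureTheory Metric Set Pointwise

-- scaling lemma
lemma scaling_aux {d : ℕ} (F : EuclideanSpace ℝ (Fin d) → ℝ)
    (hF : ∀ (c : ℝ), 0 < c → ∀ x, F (c • x) = F x) {t : ℝ} (ht : 0 < t) :
    ∫ x in closedBall (0 : EuclideanSpace ℝ (Fin d)) t, F x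
      = t ^ d * ∫ x in closedBall (0 : EuclideanSpace ℝ (Fin d)) 1, F x := by
  have h := MeasureTheory.Measure.setIntegral_comp_smul_of_pos (volume)
      F (closedBall (0 : EuclideanSpace ℝ (Fin d)) 1) ht
  have h2 : (fun x : EuclideanSpace ℝ (Fin d) => F (t • x)) = F := by
    funext x; exact hF t ht x
  rw [h2] at h
  have h3 : t • closedBall (0 : EuclideanSpace ℝ (Fin d)) 1 = closedBall 0 t := by
    rw [_root_.smul_closedBall _ _ zero_le_one, smul_zero, Real.norm_eq_abs,
      abs_of_pos ht, mul_one]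
  rw [h3, finrank_euclideanSpace_fin, smul_eq_mul] at h
  rw [h]
  field_simp

lemma bddInt_aux {d : ℕ} (f : EuclideanSpace ℝ (Fin d) → ℝ) (hm : Measurable f) {C : ℝ}
    {s : Set (EuclideanSpace ℝ (Fin d))} (hs : MeasurableSet s) (hb : ∀ x ∈ s, |f x| ≤ C)
    (hfin : volume s ≠ ⊤) : IntegrableOn f s := by
  haveI : IsFiniteMeasure (volume.restrict s) :=
    ⟨by rwa [Measure.restrict_apply_univ, lt_top_iff_ne_top]⟩
  exact Integrable.mono' (integrable_const C) hm.aestronglyMeasurable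
    ((ae_restrict_mem hs).mono fun x hx => by rw [Real.norm_eq_abs]; exact hb x hx)

noncomputable def phiAux {d : ℕ} (k : ℕ) (F : EuclideanSpace ℝ (Fin d) → ℝ)
    (x : EuclideanSpace ℝ (Fin d)) (t : ℝ) : ℝ :=
  if t < ‖x‖ then F x * (k * t ^ (k - 1)) else 0

set_option maxHeartbeats 800000 in
lemma moment_aux {d k : ℕ} (hk : 1 ≤ k) (F : EuclideanSpace ℝ (Fin d) → ℝ)
    (hFm : Measurable F) {C : ℝ} (hC : ∀ x, |F x| ≤ C)
    (hF : ∀ (c : ℝ), 0 < c → ∀ x, F (c • x) = F x) :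
    ∫ x in closedBall (0 : EuclideanSpace ℝ (Fin d)) 1, F x * ‖x‖ ^ k
      = ((d : ℝ) / (d + k)) * ∫ x in closedBall (0 : EuclideanSpace ℝ (Fin d)) 1, F x := by
  have hC0 : 0 ≤ C := (abs_nonneg _).trans (hC 0)
  have hk0 : (k : ℝ) ≠ 0 := by
    have : (0:ℝ) < k := by exact_mod_cast hk
    exact ne_of_gt this
  set B1 : Set (EuclideanSpace ℝ (Fin d)) := closedBall 0 1 with hB1
  set I : ℝ := ∫ x in B1, F x with hI
  -- boundedness facts
  have hCk : ∀ (c : ℝ), ∀ x, |F x * c| ≤ C * |c| := fun c x => by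
    rw [abs_mul]; exact mul_le_mul_of_nonneg_right (hC x) (abs_nonneg c)
  haveI : IsFiniteMeasure (volume.restrict B1) :=
    ⟨by rw [Measure.restrict_apply_univ]; exact measure_closedBall_lt_top⟩
  haveI : IsFiniteMeasure (volume.restrict (Ioc (0:ℝ) 1)) :=
    ⟨by rw [Measure.restrict_apply_univ]; exact measure_Ioc_lt_top⟩
  -- integrability of phiAux on the product
  have hmeas : AEStronglyMeasurable (Function.uncurry (phiAux k F))
      ((volume.restrict B1).prod (volume.restrict (Ioc (0:ℝ) 1))) := by
    have hS : MeasurableSet {p : (EuclideanSpace ℝ (Fin d)) × ℝ | p.2 < ‖p.1‖} :=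
      (isOpen_lt continuous_snd continuous_fst.norm).measurableSet
    have heq : Function.uncurry (phiAux k F)
        = Set.indicator {p : (EuclideanSpace ℝ (Fin d)) × ℝ | p.2 < ‖p.1‖}
          (fun p => F p.1 * ((k : ℝ) * p.2 ^ (k - 1))) := by
      funext p
      simp only [Function.uncurry, phiAux, Set.indicator_apply, Set.mem_setOf_eq]
    rw [heq]
    exact (((hFm.comp measurable_fst).mul
      ((measurable_const.mul (measurable_snd.pow_const _)))).indicator hS).aestronglyMeasurable
  have hΦint : Integrable (Function.uncurry (phiAux k F))
      ((volume.restrict B1).prod (volume.restrict (Ioc (0:ℝ) 1))) := by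
    apply Integrable.mono' (g := fun _ => C * k) (integrable_const _) hmeas
    have hae : ∀ᵐ p ∂((volume.restrict B1).prod (volume.restrict (Ioc (0:ℝ) 1))),
        p ∈ B1 ×ˢ Ioc (0:ℝ) 1 := by
      rw [Measure.prod_restrict]
      exact ae_restrict_mem (measurableSet_closedBall.prod measurableSet_Ioc)
    filter_upwards [hae] with p hp
    rw [Real.norm_eq_abs]
    simp only [Function.uncurry, phiAux]
    split_ifs with h
    · have h2 : |p.2| ≤ 1 := abs_le.2 ⟨by linarith [hp.2.1], hp.2.2⟩
      have h3 : |p.2 ^ (k - 1)| ≤ 1 := by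
        rw [abs_pow]; exact pow_le_one₀ (abs_nonneg _) h2
      calc |F p.1 * ((k:ℝ) * p.2 ^ (k-1))| ≤ C * |(k:ℝ) * p.2 ^ (k-1)| := hCk _ _
        _ = C * ((k:ℝ) * |p.2 ^ (k-1)|) := by
            rw [abs_mul, abs_of_nonneg (by positivity : (0:ℝ) ≤ (k:ℝ))]
        _ ≤ C * ((k:ℝ) * 1) := by
            apply mul_le_mul_of_nonneg_left _ hC0
            exact mul_le_mul_of_nonneg_left h3 (by positivity)
        _ = C * k := by ring
    · simp only [abs_zero]; positivity
  -- inner integral in t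
  have hL : ∀ x ∈ B1, (∫ t in Ioc (0:ℝ) 1, phiAux k F x t) = F x * ‖x‖ ^ k := by
    intro x hx
    rw [hB1, mem_closedBall_zero_iff] at hx
    have hxe : Set.EqOn (phiAux k F x)
        ((Ioo (0:ℝ) ‖x‖).indicator (fun t => F x * ((k:ℝ) * t ^ (k - 1)))) (Ioc (0:ℝ) 1) := by
      intro t ht
      simp only [phiAux]
      by_cases h : t < ‖x‖
      · rw [if_pos h, Set.indicator_of_mem (mem_Ioo.2 ⟨ht.1, h⟩)]
      · rw [if_neg h, Set.indicator_of_notMem (fun hh => h (mem_Ioo.1 hh).2)]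
    rw [setIntegral_congr_fun measurableSet_Ioc hxe,
      setIntegral_indicator measurableSet_Ioo,
      inter_eq_self_of_subset_right
        (fun t (ht : t ∈ Ioo (0:ℝ) ‖x‖) => mem_Ioc.2 ⟨ht.1, le_trans (le_of_lt ht.2) hx⟩),
      ← integral_Ioc_eq_integral_Ioo, ← intervalIntegral.integral_of_le (norm_nonneg x),
      intervalIntegral.integral_const_mul, intervalIntegral.integral_const_mul,
      integral_pow]
    have e1 : k - 1 + 1 = k := Nat.succ_pred_eq_of_pos hk
    rw [e1, zero_pow (by omega : k ≠ 0)]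
    have e2 : ((k - 1 : ℕ) : ℝ) + 1 = (k : ℝ) := by exact_mod_cast congrArg (Nat.cast : ℕ → ℝ) e1
    rw [e2]
    field_simp
    ring
  -- inner integral in x
  have hR : ∀ t ∈ Ioc (0:ℝ) 1, (∫ x in B1, phiAux k F x t)
      = ((k:ℝ) * t ^ (k - 1)) * ((1 - t ^ d) * I) := by
    intro t ht
    have hsplit : Set.EqOn (fun x => phiAux k F x t)
        (fun x => F x * ((k:ℝ) * t ^ (k-1))
          - (closedBall (0 : EuclideanSpace ℝ (Fin d)) t).indicator
              (fun x => F x * ((k:ℝ) * t ^ (k-1))) x) B1 := by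
      intro x _
      simp only [phiAux]
      by_cases h : t < ‖x‖
      · rw [if_pos h, Set.indicator_of_notMem
          (fun hh => (not_le.2 h) (mem_closedBall_zero_iff.1 hh)), sub_zero]
      · rw [if_neg h, Set.indicator_of_mem
          (mem_closedBall_zero_iff.2 (not_lt.1 h)), sub_self]
    have hint1 : IntegrableOn (fun x => F x * ((k:ℝ) * t ^ (k-1))) B1 :=
      bddInt_aux _ (hFm.mul_const _) measurableSet_closedBall (fun x _ => hCk _ x) (measure_closedBall_lt_top).ne
    have hint2 : IntegrableOn ((closedBall (0 : EuclideanSpace ℝ (Fin d)) t).indicator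
        (fun x => F x * ((k:ℝ) * t ^ (k-1)))) B1 := by
      apply bddInt_aux _ ((hFm.mul_const _).indicator measurableSet_closedBall)
        (C := C * |(k:ℝ) * t ^ (k-1)|) measurableSet_closedBall _ (measure_closedBall_lt_top).ne
      intro x _
      by_cases h : x ∈ closedBall (0 : EuclideanSpace ℝ (Fin d)) t
      · rw [Set.indicator_of_mem h]; exact hCk _ x
      · rw [Set.indicator_of_notMem h]; simp only [abs_zero]; positivity
    rw [setIntegral_congr_fun measurableSet_closedBall hsplit, integral_sub hint1 hint2,
      setIntegral_indicator measurableSet_closedBall,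
      inter_eq_self_of_subset_right (closedBall_subset_closedBall ht.2),
      integral_mul_const, integral_mul_const, scaling_aux F hF ht.1]
    rw [← hI]
    ring
  -- put it together
  have key : ∫ x in B1, F x * ‖x‖ ^ k
      = ∫ t in Ioc (0:ℝ) 1, ((k:ℝ) * t ^ (k - 1)) * ((1 - t ^ d) * I) := by
    rw [← setIntegral_congr_fun measurableSet_closedBall hL,
      integral_integral_swap hΦint,
      setIntegral_congr_fun measurableSet_Ioc hR]
  rw [key, ← intervalIntegral.integral_of_le zero_le_one]
  have hrw : ∀ t : ℝ, ((k:ℝ) * t ^ (k - 1)) * ((1 - t ^ d) * I)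
      = I * ((k:ℝ) * t ^ (k-1)) - I * ((k:ℝ) * t ^ (k-1+d)) := by
    intro t; rw [pow_add]; ring
  simp only [hrw]
  have c1 : Continuous fun t : ℝ => I * ((k:ℝ) * t ^ (k-1)) :=
    continuous_const.mul (continuous_const.mul (continuous_pow _))
  have c2 : Continuous fun t : ℝ => I * ((k:ℝ) * t ^ (k-1+d)) :=
    continuous_const.mul (continuous_const.mul (continuous_pow _))
  rw [intervalIntegral.integral_sub (c1.intervalIntegrable _ _) (c2.intervalIntegrable _ _),
    intervalIntegral.integral_const_mul, intervalIntegral.integral_const_mul,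
    intervalIntegral.integral_const_mul, intervalIntegral.integral_const_mul,
    integral_pow, integral_pow]
  have e1 : k - 1 + 1 = k := Nat.succ_pred_eq_of_pos hk
  have e3 : k - 1 + d + 1 = k + d := by omega
  rw [e1, e3, one_pow, one_pow, zero_pow (by omega : k ≠ 0), zero_pow (by omega : k + d ≠ 0)]
  have e2 : ((k - 1 : ℕ) : ℝ) + 1 = (k : ℝ) := by exact_mod_cast congrArg (Nat.cast : ℕ → ℝ) e1
  have e4 : ((k - 1 + d : ℕ) : ℝ) + 1 = (k : ℝ) + d := by exact_mod_cast congrArg (Nat.cast : ℕ → ℝ) e3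
  rw [e2, e4]
  have hkd : (k : ℝ) + d ≠ 0 := by positivity
  field_simp
  ring

set_option maxHeartbeats 1000000 in
/-- For the kernel `ψℓ(x) = (1 - ((2d+4)/(d+1))‖x‖ + ((d+3)/(d+1))‖x‖²)·1{‖x‖ ≤ 1}` on `ℝ^d`
and every convex function `g : ℝ^d → ℝ` with `g 0 = 0`,
one has `∫_{‖x‖≤1} g(x) ψℓ(x) dx ≤ 0`. -/
theorem convex_lower_kernel_nonpos {d : ℕ} (g : EuclideanSpace ℝ (Fin d) → ℝ)
    (hg : ConvexOn ℝ Set.univ g) (h0 : g 0 = 0) :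
    ∫ x in Metric.closedBall (0 : EuclideanSpace ℝ (Fin d)) 1,
      g x * (1 - ((2 * (d : ℝ) + 4) / ((d : ℝ) + 1)) * ‖x‖
        + (((d : ℝ) + 3) / ((d : ℝ) + 1)) * ‖x‖ ^ 2) ≤ 0 := by
  rcases Nat.eq_zero_or_pos d with hd0 | hd
  · subst hd0
    have hz : ∀ x : EuclideanSpace ℝ (Fin 0), x = 0 := fun x => PiLp.ext fun i => Fin.elim0 i
    refine le_of_eq (integral_eq_zero_of_ae ?_)
    filter_upwards with x
    simp [hz x, h0]
  · -- d ≥ 1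
    set D := (d : ℝ) with hDdef
    have hD1 : (1 : ℝ) ≤ D := by have h : (1:ℕ) ≤ d := hd; rw [hDdef]; exact_mod_cast h
    have hD3 : (0 : ℝ) < D + 3 := by linarith
    have hDp1 : (0 : ℝ) < D + 1 := by linarith
    have hD3ne : D + 3 ≠ 0 := ne_of_gt hD3
    have hDp1ne : D + 1 ≠ 0 := ne_of_gt hDp1
    set r0 : ℝ := (D + 1) / (D + 3) with hr0def
    have hr0pos : 0 < r0 := div_pos hDp1 hD3
    have hr0ne : r0 ≠ 0 := ne_of_gt hr0pos
    have hgc : Continuous g := by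
      exact continuousOn_univ.mp (hg.continuousOn isOpen_univ)
    obtain ⟨C, hCb⟩ := (isCompact_sphere (0 : EuclideanSpace ℝ (Fin d)) r0).exists_bound_of_continuousOn
      hgc.continuousOn
    set F : EuclideanSpace ℝ (Fin d) → ℝ := fun x => r0⁻¹ * g ((r0 * ‖x‖⁻¹) • x) with hFdef
    have hFmeas : Measurable F := by
      apply Measurable.const_mul
      exact hgc.measurable.comp (((measurable_norm.inv).const_mul r0).smul measurable_id)
    have hFzero : F 0 = 0 := by simp [hFdef, h0]
    have hsphere : ∀ x : EuclideanSpace ℝ (Fin d), x ≠ 0 → ‖(r0 * ‖x‖⁻¹) • x‖ = r0 := by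
      intro x hx
      have hxn : (0:ℝ) < ‖x‖ := norm_pos_iff.2 hx
      rw [norm_smul, Real.norm_eq_abs, abs_of_pos (by positivity : 0 < r0 * ‖x‖⁻¹)]
      field_simp
    have hFb : ∀ x, |F x| ≤ r0⁻¹ * max C 0 := by
      intro x
      rcases eq_or_ne x 0 with rfl | hx
      · rw [hFzero, abs_zero]; positivity
      · show |r0⁻¹ * g ((r0 * ‖x‖⁻¹) • x)| ≤ r0⁻¹ * max C 0
        rw [abs_mul, abs_of_pos (inv_pos.2 hr0pos)]
        refine mul_le_mul_of_nonneg_left ?_ (le_of_lt (inv_pos.2 hr0pos))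
        refine le_trans ?_ (le_max_left C 0)
        rw [← Real.norm_eq_abs]
        exact hCb _ (by rw [mem_sphere_zero_iff_norm]; exact hsphere x hx)
    have hFhom : ∀ (c : ℝ), 0 < c → ∀ x, F (c • x) = F x := by
      intro c hc x
      rcases eq_or_ne x 0 with rfl | hx
      · rw [smul_zero]
      · have hxn : (0:ℝ) < ‖x‖ := norm_pos_iff.2 hx
        show r0⁻¹ * g ((r0 * ‖c • x‖⁻¹) • (c • x)) = r0⁻¹ * g ((r0 * ‖x‖⁻¹) • x)
        congr 2
        rw [norm_smul, Real.norm_eq_abs, abs_of_pos hc, smul_smul]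
        congr 1
        field_simp
    -- pointwise inequality
    have hkey : ∀ x ∈ closedBall (0 : EuclideanSpace ℝ (Fin d)) 1,
        g x * (1 - ((2 * D + 4) / (D + 1)) * ‖x‖ + ((D + 3) / (D + 1)) * ‖x‖ ^ 2)
          ≤ (F x * ‖x‖) * (1 - ((2 * D + 4) / (D + 1)) * ‖x‖ + ((D + 3) / (D + 1)) * ‖x‖ ^ 2) := by
      intro x hx
      rw [mem_closedBall_zero_iff] at hx
      rcases eq_or_ne x 0 with rfl | hxne
      · simp [h0]
      have hs : (0:ℝ) < ‖x‖ := norm_pos_iff.2 hxne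
      have hsne : ‖x‖ ≠ 0 := ne_of_gt hs
      have hψ : 1 - ((2 * D + 4) / (D + 1)) * ‖x‖ + ((D + 3) / (D + 1)) * ‖x‖ ^ 2
          = ((D + 3) / (D + 1)) * ((r0 - ‖x‖) * (1 - ‖x‖)) := by
        rw [hr0def]; field_simp; ring
      have hgy : F x = r0⁻¹ * g ((r0 * ‖x‖⁻¹) • x) := rfl
      rcases le_total ‖x‖ r0 with hcase | hcase
      · have ha1 : 0 ≤ ‖x‖ / r0 := by positivity
        have ha2 : 0 ≤ 1 - ‖x‖ / r0 := by
          rw [sub_nonneg, div_le_one hr0pos]; exact hcase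
        have hcomb : (‖x‖ / r0) • ((r0 * ‖x‖⁻¹) • x)
            + (1 - ‖x‖ / r0) • (0 : EuclideanSpace ℝ (Fin d)) = x := by
          rw [smul_zero, add_zero, smul_smul]
          have h1 : ‖x‖ / r0 * (r0 * ‖x‖⁻¹) = 1 := by field_simp
          rw [h1, one_smul]
        have hconv := hg.2 (Set.mem_univ ((r0 * ‖x‖⁻¹) • x)) (Set.mem_univ 0) ha1 ha2 (by ring)
        rw [hcomb] at hconv
        simp only [smul_eq_mul, h0, mul_zero, add_zero] at hconv
        have hgle : g x ≤ F x * ‖x‖ := by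
          rw [hgy]
          have heq : ‖x‖ / r0 * g ((r0 * ‖x‖⁻¹) • x)
              = r0⁻¹ * g ((r0 * ‖x‖⁻¹) • x) * ‖x‖ := by
            rw [div_eq_mul_inv]; ring
          linarith
        have hψpos : 0 ≤ 1 - ((2 * D + 4) / (D + 1)) * ‖x‖ + ((D + 3) / (D + 1)) * ‖x‖ ^ 2 := by
          rw [hψ]
          have h2 : 0 ≤ (r0 - ‖x‖) * (1 - ‖x‖) :=
            mul_nonneg (by linarith) (by linarith)
          positivity
        exact mul_le_mul_of_nonneg_right hgle hψpos
      · have hb1 : 0 ≤ r0 / ‖x‖ := by positivity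
        have hb2 : 0 ≤ 1 - r0 / ‖x‖ := by rw [sub_nonneg, div_le_one hs]; exact hcase
        have hcomb : (r0 / ‖x‖) • x + (1 - r0 / ‖x‖) • (0 : EuclideanSpace ℝ (Fin d))
            = (r0 * ‖x‖⁻¹) • x := by
          rw [smul_zero, add_zero, div_eq_mul_inv]
        have hconv := hg.2 (Set.mem_univ x) (Set.mem_univ 0) hb1 hb2 (by ring)
        rw [hcomb] at hconv
        simp only [smul_eq_mul, h0, mul_zero, add_zero] at hconv
        have hgle : F x * ‖x‖ ≤ g x := by
          rw [hgy]
          have h2 := mul_le_mul_of_nonneg_left hconv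
            (le_of_lt (by positivity : (0:ℝ) < r0⁻¹ * ‖x‖))
          have h3 : r0⁻¹ * ‖x‖ * (r0 / ‖x‖ * g x) = g x := by
            field_simp
          nlinarith [h2, h3]
        have hψneg : 1 - ((2 * D + 4) / (D + 1)) * ‖x‖ + ((D + 3) / (D + 1)) * ‖x‖ ^ 2 ≤ 0 := by
          rw [hψ]
          have h2 : (r0 - ‖x‖) * (1 - ‖x‖) ≤ 0 :=
            mul_nonpos_of_nonpos_of_nonneg (by linarith) (by linarith)
          exact mul_nonpos_iff.2 (Or.inl ⟨by positivity, h2⟩)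
        exact mul_le_mul_of_nonpos_right hgle hψneg
    -- integrability
    have hψcont : Continuous fun x : EuclideanSpace ℝ (Fin d) =>
        1 - ((2 * D + 4) / (D + 1)) * ‖x‖ + ((D + 3) / (D + 1)) * ‖x‖ ^ 2 :=
      (continuous_const.sub (continuous_const.mul continuous_norm)).add
        (continuous_const.mul (continuous_norm.pow 2))
    have hg_int : IntegrableOn (fun x => g x *
        (1 - ((2 * D + 4) / (D + 1)) * ‖x‖ + ((D + 3) / (D + 1)) * ‖x‖ ^ 2))
        (closedBall (0 : EuclideanSpace ℝ (Fin d)) 1) :=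
      (hgc.mul hψcont).continuousOn.integrableOn_compact (isCompact_closedBall _ _)
    have hFk : ∀ k : ℕ, IntegrableOn (fun x => F x * ‖x‖ ^ k)
        (closedBall (0 : EuclideanSpace ℝ (Fin d)) 1) := by
      intro k
      refine bddInt_aux _ (hFmeas.mul (measurable_norm.pow_const _)) measurableSet_closedBall
        (C := r0⁻¹ * max C 0) (fun x hx => ?_) (measure_closedBall_lt_top).ne
      rw [mem_closedBall_zero_iff] at hx
      show |F x * ‖x‖ ^ k| ≤ _
      rw [abs_mul, abs_pow, abs_of_nonneg (norm_nonneg x)]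
      calc |F x| * ‖x‖ ^ k ≤ (r0⁻¹ * max C 0) * 1 := by
            refine mul_le_mul (hFb x) (pow_le_one₀ (norm_nonneg x) hx) (by positivity) (by positivity)
        _ = r0⁻¹ * max C 0 := mul_one _
    have hGrw : ∀ x : EuclideanSpace ℝ (Fin d), (F x * ‖x‖) *
        (1 - ((2 * D + 4) / (D + 1)) * ‖x‖ + ((D + 3) / (D + 1)) * ‖x‖ ^ 2)
        = F x * ‖x‖ ^ 1 - ((2 * D + 4) / (D + 1)) * (F x * ‖x‖ ^ 2)
          + ((D + 3) / (D + 1)) * (F x * ‖x‖ ^ 3) := fun x => by ring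
    have hG_int : IntegrableOn (fun x => (F x * ‖x‖) *
        (1 - ((2 * D + 4) / (D + 1)) * ‖x‖ + ((D + 3) / (D + 1)) * ‖x‖ ^ 2))
        (closedBall (0 : EuclideanSpace ℝ (Fin d)) 1) := by
      refine (((hFk 1).sub ((hFk 2).const_mul ((2 * D + 4) / (D + 1)))).add
        ((hFk 3).const_mul ((D + 3) / (D + 1)))).congr ?_
      exact ae_of_all _ fun x => ((hGrw x).symm.trans (by ring))
    have hmono := setIntegral_mono_on hg_int hG_int measurableSet_closedBall hkey
    have hGval : (∫ x in closedBall (0 : EuclideanSpace ℝ (Fin d)) 1, (F x * ‖x‖) *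
        (1 - ((2 * D + 4) / (D + 1)) * ‖x‖ + ((D + 3) / (D + 1)) * ‖x‖ ^ 2)) = 0 := by
      have i2 : IntegrableOn (fun x => (2 * D + 4) / (D + 1) * (F x * ‖x‖ ^ 2))
          (closedBall (0 : EuclideanSpace ℝ (Fin d)) 1) := (hFk 2).const_mul _
      have i3 : IntegrableOn (fun x => (D + 3) / (D + 1) * (F x * ‖x‖ ^ 3))
          (closedBall (0 : EuclideanSpace ℝ (Fin d)) 1) := (hFk 3).const_mul _
      have i12 : IntegrableOn (fun x => F x * ‖x‖ ^ 1
            - (2 * D + 4) / (D + 1) * (F x * ‖x‖ ^ 2))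
          (closedBall (0 : EuclideanSpace ℝ (Fin d)) 1) := (hFk 1).sub i2
      rw [setIntegral_congr_fun measurableSet_closedBall (fun x _ => hGrw x),
        integral_add i12 i3,
        integral_sub (hFk 1) i2,
        integral_const_mul, integral_const_mul,
        moment_aux (le_refl 1) F hFmeas hFb hFhom,
        moment_aux (by norm_num : 1 ≤ 2) F hFmeas hFb hFhom,
        moment_aux (by norm_num : 1 ≤ 3) F hFmeas hFb hFhom]
      push_cast
      rw [← hDdef]
      have hD2 : D + 2 ≠ 0 := by linarith
      field_simp
      ring
    linarith [hmono, hGval]
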